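/- Let F be a limit fractal with inf_{n,i} λ_{ni} = λ̲ > 0 and sup λ_{ni} = λ̄ < 1, satisfying the open set condition, and let d_geo be the Euclidean geodesic distance on F (infimum of lengths of rectifiable curves in F joining two points, assumed finite). Then there is a constant c ≥ 1 such that ‖x−y‖ ≤ d(x,y) ≤ c · d_geo(x,y) for all x,y ∈ F, where d is the Connes metric of the parent-child spectral triple. -/

import Mathlib

open Filter MeasureTheory Set

/-- Composition of the maps `w (k, σ k)` along a word `σ` of length `n`. -/
def compWord {X : Type*} (w : ℕ → ℕ → X → X) : (n : ℕ) → (Fin n → ℕ) → X → X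
  | 0, _, x => x
  | n + 1, σ, x => compWord w n (fun k => σ k.castSucc) (w n (σ (Fin.last n)) x)

/-- The limit fractal determined by the contractions `w n j`, `j < p n`. -/
def limitSet {X : Type*} (w : ℕ → ℕ → X → X) (p : ℕ → ℕ) (C : Set X) : Set X :=
  ⋂ n, ⋃ (σ : Fin n → ℕ) (_ : ∀ k, σ k < p k), compWord w n σ '' C

/-- A function is admissible for the parent–child Dirac operator `D`
(`‖[D,f]‖ ≤ 1`). -/
def DiracAdmissible {N : ℕ}
    (w : ℕ → ℕ → EuclideanSpace ℝ (Fin N) → EuclideanSpace ℝ (Fin N))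
    (p : ℕ → ℕ) (x₀ : EuclideanSpace ℝ (Fin N))
    (f : EuclideanSpace ℝ (Fin N) → ℝ) : Prop :=
  Continuous f ∧
    ∀ (n : ℕ) (σ : Fin n → ℕ), (∀ k, σ k < p k) → ∀ i < p n,
      |f (compWord w n σ x₀) - f (compWord w (n + 1) (Fin.snoc σ i) x₀)| ≤
        dist (compWord w n σ x₀) (compWord w (n + 1) (Fin.snoc σ i) x₀)

/-- Connes distance of the parent–child spectral triple. -/
noncomputable def connesDist {N : ℕ}
    (w : ℕ → ℕ → EuclideanSpace ℝ (Fin N) → EuclideanSpace ℝ (Fin N))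
    (p : ℕ → ℕ) (x₀ x y : EuclideanSpace ℝ (Fin N)) : ℝ :=
  sSup {t | ∃ f : EuclideanSpace ℝ (Fin N) → ℝ,
    DiracAdmissible w p x₀ f ∧ t = |f x - f y|}

open RealInnerProductSpace

set_option linter.unusedSectionVars false

namespace Stmt17

def compL {X : Type*} (w : ℕ → ℕ → X → X) : ℕ → List ℕ → X → X
  | _, [], x => x
  | m, i :: l, x => w m i (compL w (m + 1) l x)

def AdmL (p : ℕ → ℕ) : ℕ → List ℕ → Prop
  | _, [] => True
  | m, i :: l => i < p m ∧ AdmL p (m + 1) l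

def LamL (lam : ℕ → ℕ → ℝ) : ℕ → List ℕ → ℝ
  | _, [] => 1
  | m, i :: l => lam m i * LamL lam (m + 1) l

variable {X : Type*} {w : ℕ → ℕ → X → X} {p : ℕ → ℕ} {lam : ℕ → ℕ → ℝ}

@[simp] lemma compL_nil (m : ℕ) (x : X) : compL w m [] x = x := rfl
@[simp] lemma compL_cons (m i : ℕ) (l : List ℕ) (x : X) :
    compL w m (i :: l) x = w m i (compL w (m + 1) l x) := rfl
@[simp] lemma AdmL_nil (m : ℕ) : AdmL p m [] := trivial
@[simp] lemma AdmL_cons {m i : ℕ} {l : List ℕ} :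
    AdmL p m (i :: l) ↔ i < p m ∧ AdmL p (m + 1) l := Iff.rfl
@[simp] lemma LamL_nil (m : ℕ) : LamL lam m [] = 1 := rfl
@[simp] lemma LamL_cons (m i : ℕ) (l : List ℕ) :
    LamL lam m (i :: l) = lam m i * LamL lam (m + 1) l := rfl

lemma compL_append (m : ℕ) (l₁ l₂ : List ℕ) (x : X) :
    compL w m (l₁ ++ l₂) x = compL w m l₁ (compL w (m + l₁.length) l₂ x) := by
  induction l₁ generalizing m with
  | nil => simp
  | cons i t ih =>
      simp only [List.cons_append, compL_cons, ih (m + 1), List.length_cons]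
      ring_nf

lemma AdmL_append {m : ℕ} {l₁ l₂ : List ℕ} :
    AdmL p m (l₁ ++ l₂) ↔ AdmL p m l₁ ∧ AdmL p (m + l₁.length) l₂ := by
  induction l₁ generalizing m with
  | nil => simp
  | cons i t ih =>
      simp only [List.cons_append, AdmL_cons, ih, List.length_cons, and_assoc]
      rw [show m + (t.length + 1) = m + 1 + t.length by omega]

lemma AdmL_prefix {m : ℕ} {l₁ l₂ : List ℕ} (h : AdmL p m l₂) (hpre : l₁ <+: l₂) :
    AdmL p m l₁ := by
  obtain ⟨t, rfl⟩ := hpre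
  exact (AdmL_append.1 h).1

lemma LamL_append (m : ℕ) (l₁ l₂ : List ℕ) :
    LamL lam m (l₁ ++ l₂) = LamL lam m l₁ * LamL lam (m + l₁.length) l₂ := by
  induction l₁ generalizing m with
  | nil => simp
  | cons i t ih =>
      simp only [List.cons_append, LamL_cons, ih (m + 1), List.length_cons]
      rw [show m + 1 + t.length = m + (t.length + 1) by omega]; ring

lemma compWord_eq_compL (n : ℕ) (σ : Fin n → ℕ) (x : X) :
    compWord w n σ x = compL w 0 (List.ofFn σ) x := by
  induction n generalizing x with
  | zero => simp [compWord]
  | succ n ih =>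
      rw [compWord, ih, List.ofFn_succ' σ, List.concat_eq_append, compL_append]
      simp

lemma AdmL_ofFn {n : ℕ} {σ : Fin n → ℕ} (h : ∀ k, σ k < p k) : AdmL p 0 (List.ofFn σ) := by
  suffices H : ∀ (m : ℕ) (n : ℕ) (σ : Fin n → ℕ), (∀ k : Fin n, σ k < p (m + k)) →
      AdmL p m (List.ofFn σ) by
    exact H 0 n σ (by simpa using h)
  intro m n
  induction n generalizing m with
  | zero => intro σ _; simp
  | succ n ih =>
      intro σ hσ
      rw [List.ofFn_succ]
      refine ⟨by simpa using hσ 0, ih (m + 1) _ fun k => ?_⟩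
      have := hσ k.succ
      simpa [Nat.add_assoc, Nat.add_comm 1 k.1] using this

lemma AdmL_get_gen : ∀ (m : ℕ) (l : List ℕ), AdmL p m l → ∀ k : Fin l.length, l.get k < p (m + k) := by
  intro m l
  induction l generalizing m with
  | nil => intro _ k; exact absurd k.2 (by simp)
  | cons i t ih =>
      rintro ⟨h1, h2⟩ k
      rcases k with ⟨_ | j, hk⟩
      · simpa using h1
      · have := ih (m + 1) h2 ⟨j, by simpa using Nat.lt_of_succ_lt_succ hk⟩
        simpa [Nat.add_assoc, Nat.add_comm 1 j] using this

lemma AdmL_get {l : List ℕ} (h : AdmL p 0 l) : ∀ k : Fin l.length, l.get k < p k := by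
  have := AdmL_get_gen (p := p) 0 l h
  simpa using this





variable {N : ℕ}

local notation "E" => EuclideanSpace ℝ (Fin N)

lemma sim_continuous {X Y : Type*} [PseudoMetricSpace X] [PseudoMetricSpace Y]
    {f : X → Y} {r : ℝ} (h : ∀ a b, dist (f a) (f b) = r * dist a b) : Continuous f := by
  refine (LipschitzWith.of_dist_le_mul (K := Real.toNNReal r) fun a b => ?_).continuous
  rw [h a b, Real.coe_toNNReal']
  exact mul_le_mul_of_nonneg_right (le_max_left _ _) dist_nonneg

lemma sim_injective {X Y : Type*} [MetricSpace X] [MetricSpace Y]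
    {f : X → Y} {r : ℝ} (hr : 0 < r) (h : ∀ a b, dist (f a) (f b) = r * dist a b) :
    Function.Injective f := by
  intro a b hab
  have := h a b
  rw [hab, dist_self] at this
  have : dist a b = 0 := by
    rcases mul_eq_zero.1 this.symm with h' | h'
    · exact absurd h' (ne_of_gt hr)
    · exact h'
  exact dist_eq_zero.1 this

lemma sim_surjective {f : E → E} {r : ℝ} (hr : 0 < r)
    (h : ∀ a b, dist (f a) (f b) = r * dist a b) : Function.Surjective f := by
  set g : E → E := fun a => r⁻¹ • (f a - f 0) with hg
  have hnormsub : ∀ a b, ‖g a - g b‖ = ‖a - b‖ := by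
    intro a b
    have e : g a - g b = r⁻¹ • (f a - f b) := by
      show r⁻¹ • (f a - f 0) - r⁻¹ • (f b - f 0) = _
      rw [← smul_sub]; congr 1; abel
    rw [e, norm_smul, Real.norm_eq_abs, abs_of_pos (inv_pos.2 hr),
      show ‖f a - f b‖ = r * ‖a - b‖ by rw [← dist_eq_norm, ← dist_eq_norm, h],
      ← mul_assoc, inv_mul_cancel₀ (ne_of_gt hr), one_mul]
  have hnorm : ∀ a, ‖g a‖ = ‖a‖ := by
    intro a
    have := hnormsub a 0
    simpa [hg] using this
  have hinner : ∀ a b, ⟪g a, g b⟫ = ⟪a, b⟫ := by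
    intro a b
    have h1 := norm_sub_sq_real (g a) (g b)
    have h2 := norm_sub_sq_real a b
    rw [hnormsub, hnorm, hnorm] at h1
    linarith
  have hadd : ∀ a b, g (a + b) = g a + g b := by
    intro a b
    have hz : ‖g (a + b) - (g a + g b)‖ ^ 2 = 0 := by
      rw [norm_sub_sq_real, norm_add_sq_real, inner_add_right, hinner, hinner, hinner,
        hnorm, hnorm, hnorm, norm_add_sq_real]
      simp only [inner_add_left, real_inner_self_eq_norm_sq, real_inner_comm b a]
      ring
    have := pow_eq_zero_iff (n := 2) (by norm_num) |>.1 hz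
    rw [norm_eq_zero, sub_eq_zero] at this
    exact this
  have hsmul : ∀ (c : ℝ) (a : E), g (c • a) = c • g a := by
    intro c a
    have hz : ‖g (c • a) - c • g a‖ ^ 2 = 0 := by
      have e1 : ‖g (c • a)‖ = ‖c • a‖ := hnorm _
      have e2 : ⟪g (c • a), c • g a⟫ = c * ⟪c • a, a⟫ := by
        rw [real_inner_smul_right, hinner]
      rw [norm_sub_sq_real, e1, e2, real_inner_smul_left, real_inner_self_eq_norm_sq,
        norm_smul, norm_smul, hnorm]
      simp only [Real.norm_eq_abs, mul_pow, sq_abs]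
      ring
    have := pow_eq_zero_iff (n := 2) (by norm_num) |>.1 hz
    rw [norm_eq_zero, sub_eq_zero] at this
    exact this
  let L : E →ₗ[ℝ] E := { toFun := g, map_add' := hadd, map_smul' := hsmul }
  have hLinj : Function.Injective L := by
    intro a b hab
    have : ‖g a - g b‖ = ‖a - b‖ := hnormsub a b
    simp only [show g a = L a from rfl, show g b = L b from rfl, hab, sub_self, norm_zero] at this
    rw [eq_comm, norm_eq_zero, sub_eq_zero] at this
    exact this
  have hLsurj : Function.Surjective L := (LinearMap.injective_iff_surjective).1 hLinj
  intro y
  obtain ⟨a, ha⟩ := hLsurj (r⁻¹ • (y - f 0))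
  refine ⟨a, ?_⟩
  have : g a = r⁻¹ • (y - f 0) := ha
  rw [hg] at this
  have := smul_right_injective E (inv_ne_zero (ne_of_gt hr)) this
  have : f a = y := by rwa [sub_left_inj] at this
  exact this

lemma sim_image_closedBall {f : E → E} {r : ℝ} (hr : 0 < r)
    (h : ∀ a b, dist (f a) (f b) = r * dist a b) (a : E) {s : ℝ} :
    f '' Metric.closedBall a s = Metric.closedBall (f a) (r * s) := by
  ext y
  constructor
  · rintro ⟨b, hb, rfl⟩
    rw [Metric.mem_closedBall] at hb ⊢
    rw [h b a]
    exact mul_le_mul_of_nonneg_left hb (le_of_lt hr)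
  · intro hy
    obtain ⟨b, rfl⟩ := sim_surjective hr h y
    rw [Metric.mem_closedBall, h b a] at hy
    exact ⟨b, by rw [Metric.mem_closedBall]; exact le_of_mul_le_mul_left hy hr, rfl⟩


section System

variable {X : Type*} [MetricSpace X]
variable {w : ℕ → ℕ → X → X} {p : ℕ → ℕ} {lam : ℕ → ℕ → ℝ} {lamLow lamUp : ℝ}
variable {V : Set X}

variable (hlow : 0 < lamLow) (hup : lamUp < 1)
  (hlam : ∀ n i, i < p n → lamLow ≤ lam n i ∧ lam n i ≤ lamUp)
  (hsim : ∀ n i, i < p n → ∀ a b, dist (w n i a) (w n i b) = lam n i * dist a b)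
  (hmaps : ∀ n i, i < p n → w n i '' V ⊆ V)
  (hdisj : ∀ n i j, i < p n → j < p n → i ≠ j → Disjoint (w n i '' V) (w n j '' V))

section
include hsim

lemma compL_dist {m : ℕ} {l : List ℕ} (hl : AdmL p m l) (a b : X) :
    dist (compL w m l a) (compL w m l b) = LamL lam m l * dist a b := by
  induction l generalizing m with
  | nil => simp
  | cons i t ih =>
      obtain ⟨h1, h2⟩ := hl
      simp only [compL_cons, LamL_cons]
      rw [hsim m i h1, ih h2, mul_assoc]

end

section
include hlow hlam

lemma LamL_pos {m : ℕ} {l : List ℕ} (hl : AdmL p m l) : 0 < LamL lam m l := by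
  induction l generalizing m with
  | nil => simp
  | cons i t ih =>
      obtain ⟨h1, h2⟩ := hl
      exact mul_pos (lt_of_lt_of_le hlow (hlam m i h1).1) (ih h2)

lemma pow_le_LamL {m : ℕ} {l : List ℕ} (hl : AdmL p m l) :
    lamLow ^ l.length ≤ LamL lam m l := by
  induction l generalizing m with
  | nil => simp
  | cons i t ih =>
      obtain ⟨h1, h2⟩ := hl
      simp only [List.length_cons, pow_succ, LamL_cons]
      rw [mul_comm (lamLow ^ t.length) lamLow]
      exact mul_le_mul (hlam m i h1).1 (ih h2) (pow_nonneg hlow.le _)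
        (le_trans hlow.le (hlam m i h1).1)

lemma LamL_le_pow {m : ℕ} {l : List ℕ} (hl : AdmL p m l) :
    LamL lam m l ≤ lamUp ^ l.length := by
  induction l generalizing m with
  | nil => simp
  | cons i t ih =>
      obtain ⟨h1, h2⟩ := hl
      simp only [List.length_cons, pow_succ, LamL_cons]
      rw [mul_comm (lamUp ^ t.length) lamUp]
      exact mul_le_mul (hlam m i h1).2 (ih h2) (LamL_pos hlow hlam h2).le
        (le_trans hlow.le (le_trans (hlam m i h1).1 (hlam m i h1).2))

lemma LamL_le_one {m : ℕ} {l : List ℕ} (hl : AdmL p m l) (h0up : 0 ≤ lamUp)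
    (hup : lamUp < 1) : LamL lam m l ≤ 1 :=
  le_trans (LamL_le_pow hlow hlam hl) (pow_le_one₀ h0up hup.le)

/-- `LamL` decreases along prefixes. -/
lemma LamL_prefix_le (h0up : 0 ≤ lamUp) (hup : lamUp < 1) {m : ℕ} {l₁ l₂ : List ℕ}
    (hl : AdmL p m l₂) (hpre : l₁ <+: l₂) : LamL lam m l₂ ≤ LamL lam m l₁ := by
  obtain ⟨t, rfl⟩ := hpre
  rw [LamL_append]
  rw [AdmL_append] at hl
  have h1 : 0 < LamL lam m l₁ := LamL_pos hlow hlam hl.1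
  have h2 : LamL lam (m + l₁.length) t ≤ 1 := LamL_le_one hlow hlam hl.2 h0up hup
  exact le_trans (mul_le_mul_of_nonneg_left h2 h1.le) (by rw [mul_one])

end

section
include hmaps hsim

lemma w_maps_closure {m i : ℕ} (hi : i < p m) : w m i '' closure V ⊆ closure V := by
  have hc : Continuous (w m i) := sim_continuous (hsim m i hi)
  calc w m i '' closure V ⊆ closure (w m i '' V) := image_closure_subset_closure_image hc
    _ ⊆ closure V := closure_minimal ((hmaps m i hi).trans subset_closure) isClosed_closure

lemma compL_maps_closure {m : ℕ} {l : List ℕ} (hl : AdmL p m l) :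
    compL w m l '' closure V ⊆ closure V := by
  induction l generalizing m with
  | nil => rintro _ ⟨a, ha, rfl⟩; exact ha
  | cons i t ih =>
      obtain ⟨h1, h2⟩ := hl
      intro y hy
      obtain ⟨a, ha, rfl⟩ := hy
      exact w_maps_closure hsim hmaps h1 ⟨_, ih h2 ⟨a, ha, rfl⟩, rfl⟩

lemma compL_mem_closure {m : ℕ} {l : List ℕ} (hl : AdmL p m l) {a : X}
    (ha : a ∈ closure V) : compL w m l a ∈ closure V :=
  compL_maps_closure hsim hmaps hl ⟨a, ha, rfl⟩

set_option linter.unusedSectionVars false in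
omit hsim in
lemma compL_maps_V {m : ℕ} {l : List ℕ} (hl : AdmL p m l) :
    compL w m l '' V ⊆ V := by
  induction l generalizing m with
  | nil => rintro _ ⟨a, ha, rfl⟩; exact ha
  | cons i t ih =>
      obtain ⟨h1, h2⟩ := hl
      intro y hy
      obtain ⟨a, ha, rfl⟩ := hy
      exact hmaps m i h1 ⟨_, ih h2 ⟨a, ha, rfl⟩, rfl⟩

end

section
include hlow hlam hsim hmaps hdisj

/-- Cells of incomparable admissible words are disjoint inside `V`. -/
lemma cellsV_disjoint {m : ℕ} {l₁ l₂ : List ℕ} (h₁ : AdmL p m l₁) (h₂ : AdmL p m l₂)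
    (hn₁ : ¬ l₁ <+: l₂) (hn₂ : ¬ l₂ <+: l₁) :
    Disjoint (compL w m l₁ '' V) (compL w m l₂ '' V) := by
  induction l₁ generalizing l₂ m with
  | nil => exact absurd (List.nil_prefix) hn₁
  | cons i t₁ ih =>
      cases l₂ with
      | nil => exact absurd (List.nil_prefix) hn₂
      | cons j t₂ =>
          obtain ⟨hi, ht₁⟩ := h₁
          obtain ⟨hj, ht₂⟩ := h₂
          have him : ∀ (t : List ℕ) (c : ℕ), compL w m (c :: t) '' V = w m c '' (compL w (m+1) t '' V) := by
            intro t c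
            rw [show compL w m (c :: t) = (w m c) ∘ (compL w (m+1) t) from rfl, Set.image_comp]
          by_cases hij : i = j
          · subst hij
            rw [List.cons_prefix_cons] at hn₁ hn₂
            have hd := ih ht₁ ht₂ (fun hp => hn₁ ⟨rfl, hp⟩) (fun hp => hn₂ ⟨rfl, hp⟩)
            rw [him, him]
            have hinj : Function.Injective (w m i) :=
              sim_injective (lt_of_lt_of_le hlow (hlam m i hi).1) (hsim m i hi)
            exact (Set.disjoint_image_iff hinj).2 hd
          · rw [him, him]
            exact Disjoint.mono (Set.image_mono (compL_maps_V hmaps ht₁))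
              (Set.image_mono (compL_maps_V hmaps ht₂)) (hdisj m i j hi hj hij)

end

end System

section LimitStructure

variable {X : Type*} [MetricSpace X]
variable (w : ℕ → ℕ → X → X) (p : ℕ → ℕ) (C : Set X)

/-- Admissible words of length `n` starting at level `m`. -/
def wordSet (m n : ℕ) : Set (List ℕ) := {l | l.length = n ∧ AdmL p m l}

/-- The `n`-th layer of the limit-set construction starting at level `m`. -/
def layer (m n : ℕ) : Set X := ⋃ l ∈ wordSet p m n, compL w m l '' C

/-- The limit set of the system starting at level `m`. -/
def Fs (m : ℕ) : Set X := ⋂ n, layer w p C m n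

variable {w : ℕ → ℕ → X → X} {p : ℕ → ℕ} {C : Set X}

lemma wordSet_finite (m n : ℕ) : (wordSet p m n).Finite := by
  classical
  set B := (Finset.range (m + n)).sup p + 1 with hB
  have hsub : wordSet p m n ⊆ Set.range (fun σ : Fin n → Fin B => List.ofFn fun k => (σ k).1) := by
    rintro l ⟨hlen, hadm⟩
    subst hlen
    refine ⟨fun k => ⟨l.get k, ?_⟩, by simp [List.ofFn_get]⟩
    have h1 : l.get k < p (m + k) := AdmL_get_gen m l hadm k
    have h2 : p (m + k) ≤ (Finset.range (m + l.length)).sup p :=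
      Finset.le_sup (Finset.mem_range.2 (by omega))
    omega
  exact Set.Finite.subset (Set.finite_range _) hsub

lemma mem_layer {m n : ℕ} {z : X} :
    z ∈ layer w p C m n ↔ ∃ l, (l.length = n ∧ AdmL p m l) ∧ z ∈ compL w m l '' C := by
  simp [layer, wordSet]

@[simp] lemma layer_zero (m : ℕ) : layer w p C m 0 = C := by
  ext z
  rw [mem_layer]
  constructor
  · rintro ⟨l, ⟨hlen, _⟩, hz⟩
    rw [List.length_eq_zero_iff] at hlen
    subst hlen
    simpa using hz
  · intro hz
    exact ⟨[], ⟨rfl, trivial⟩, by simpa using hz⟩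

variable (hp : ∀ n, 1 ≤ p n)
variable (hCmaps : ∀ m i, i < p m → w m i '' C ⊆ C)
variable (hcont : ∀ m i, i < p m → Continuous (w m i))
variable (hinj : ∀ m i, i < p m → Function.Injective (w m i))
variable (hCcomp : IsCompact C) (hCne : C.Nonempty)

include hCmaps in
lemma layer_antitone_succ (m n : ℕ) : layer w p C m (n + 1) ⊆ layer w p C m n := by
  intro z hz
  rw [mem_layer] at hz ⊢
  obtain ⟨l, ⟨hlen, hadm⟩, hz⟩ := hz
  have hlne : l ≠ [] := by intro h; subst h; simp at hlen
  obtain ⟨t, i, rfl⟩ : ∃ t i, l = t ++ [i] := ⟨l.dropLast, l.getLast hlne, (List.dropLast_append_getLast hlne).symm⟩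
  rw [AdmL_append] at hadm
  refine ⟨t, ⟨by simpa using hlen, hadm.1⟩, ?_⟩
  obtain ⟨c, hc, rfl⟩ := hz
  rw [compL_append]
  refine ⟨compL w (m + t.length) [i] c, ?_, rfl⟩
  have : w (m + t.length) i c ∈ C := hCmaps _ _ hadm.2.1 ⟨c, hc, rfl⟩
  simpa using this

include hCmaps in
lemma layer_antitone (m : ℕ) : Antitone (layer w p C m) :=
  antitone_nat_of_succ_le (layer_antitone_succ hCmaps m)

lemma Fs_subset_layer (m n : ℕ) : Fs w p C m ⊆ layer w p C m n := Set.iInter_subset _ n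

lemma Fs_subset (m : ℕ) : Fs w p C m ⊆ C := by
  have := Fs_subset_layer (w := w) (p := p) (C := C) m 0
  simpa using this

include hcont in
lemma compL_continuous {m : ℕ} {l : List ℕ} (hl : AdmL p m l) : Continuous (compL w m l) := by
  induction l generalizing m with
  | nil => exact continuous_id
  | cons i t ih => exact (hcont m i hl.1).comp (ih hl.2)

include hcont hCcomp in
lemma cell_isCompact {m : ℕ} {l : List ℕ} (hl : AdmL p m l) : IsCompact (compL w m l '' C) :=
  hCcomp.image (compL_continuous hcont hl)

include hcont hCcomp in
lemma layer_isCompact (m n : ℕ) : IsCompact (layer w p C m n) := by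
  have hfin : (wordSet p m n).Finite := wordSet_finite m n
  refine hfin.isCompact_biUnion fun l hl => cell_isCompact hcont hCcomp hl.2

include hcont hCcomp in
lemma layer_isClosed (m n : ℕ) : IsClosed (layer w p C m n) :=
  (layer_isCompact hcont hCcomp m n).isClosed

lemma layer_nonempty (hp : ∀ n, 1 ≤ p n) (hCne : C.Nonempty) (m n : ℕ) :
    (layer w p C m n).Nonempty := by
  obtain ⟨c, hc⟩ := hCne
  refine ⟨compL w m (List.replicate n 0) c, ?_⟩
  rw [mem_layer]
  refine ⟨List.replicate n 0, ⟨by simp, ?_⟩, ⟨c, hc, rfl⟩⟩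
  clear hc
  induction n generalizing m with
  | zero => simp [List.replicate]
  | succ n ih => exact ⟨hp m, ih (m + 1)⟩

include hp hCmaps hcont hCcomp hCne in
lemma Fs_nonempty (m : ℕ) : (Fs w p C m).Nonempty :=
  IsCompact.nonempty_iInter_of_sequence_nonempty_isCompact_isClosed _
    (layer_antitone_succ hCmaps m) (layer_nonempty hp hCne m)
    (layer_isCompact hcont hCcomp m 0) (layer_isClosed hcont hCcomp m)

include hcont hCcomp in
lemma Fs_isCompact (m : ℕ) : IsCompact (Fs w p C m) :=
  IsCompact.of_isClosed_subset (layer_isCompact hcont hCcomp m 0)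
    (isClosed_iInter (layer_isClosed hcont hCcomp m)) (Set.iInter_subset _ 0)

/-- The `limitSet` of the problem statement is `Fs 0`. -/
lemma limitSet_eq_Fs : limitSet w p C = Fs w p C 0 := by
  unfold limitSet Fs
  refine Set.iInter_congr fun n => ?_
  ext z
  simp only [Set.mem_iUnion, mem_layer]
  constructor
  · rintro ⟨σ, hσ, hz⟩
    refine ⟨List.ofFn σ, ⟨by simp, AdmL_ofFn hσ⟩, ?_⟩
    obtain ⟨c, hc, rfl⟩ := hz
    exact ⟨c, hc, (compWord_eq_compL n σ c).symm⟩
  · rintro ⟨l, ⟨hlen, hadm⟩, hz⟩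
    subst hlen
    refine ⟨l.get, AdmL_get hadm, ?_⟩
    obtain ⟨c, hc, rfl⟩ := hz
    exact ⟨c, hc, by rw [compWord_eq_compL, List.ofFn_get]⟩

section
include hp hCmaps hcont hinj hCcomp hCne

/-- One-step splitting of the limit set. -/
lemma Fs_split (m : ℕ) :
    Fs w p C m = ⋃ i ∈ Finset.range (p m), w m i '' Fs w p C (m + 1) := by
  apply Set.Subset.antisymm
  · intro z hz
    have hstep : ∀ n : ℕ, ∃ i < p m, ∃ t, (t.length = n ∧ AdmL p (m + 1) t) ∧
        z ∈ w m i '' (compL w (m + 1) t '' C) := by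
      intro n
      have := Fs_subset_layer (w := w) (p := p) (C := C) m (n + 1) hz
      rw [mem_layer] at this
      obtain ⟨l, ⟨hlen, hadm⟩, hzl⟩ := this
      cases l with
      | nil => simp at hlen
      | cons i t =>
          obtain ⟨hi, ht⟩ := hadm
          refine ⟨i, hi, t, ⟨by simpa using hlen, ht⟩, ?_⟩
          obtain ⟨c, hc, rfl⟩ := hzl
          exact ⟨compL w (m + 1) t c, ⟨c, hc, rfl⟩, rfl⟩
    choose i hi t ht hzt using hstep
    have : ∃ j : Fin (p m), Infinite ((fun n => (⟨i n, hi n⟩ : Fin (p m))) ⁻¹' {j}) :=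
      Finite.exists_infinite_fiber _
    obtain ⟨⟨j, hj⟩, hinf⟩ := this
    rw [Set.infinite_coe_iff] at hinf
    have hkey : ∀ n : ℕ, z ∈ w m j '' layer w p C (m + 1) n := by
      intro n
      obtain ⟨n', hn', hgt⟩ := hinf.exists_gt n
      have : (⟨i n', hi n'⟩ : Fin (p m)) = ⟨j, hj⟩ := hn'
      have hij : i n' = j := by simpa using congrArg Fin.val this
      have hz' := hzt n'
      rw [hij] at hz'
      obtain ⟨a, ha, rfl⟩ := hz'
      refine ⟨a, ?_, rfl⟩
      have : a ∈ layer w p C (m + 1) n' := mem_layer.2 ⟨t n', ht n', ha⟩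
      exact layer_antitone hCmaps (m + 1) hgt.le this
    choose a ha haz using hkey
    have haconst : ∀ n, a n = a 0 := fun n => hinj m j hj (by rw [haz, haz])
    refine Set.mem_biUnion (Finset.mem_range.2 hj) ⟨a 0, ?_, haz 0⟩
    exact Set.mem_iInter.2 fun n => haconst n ▸ ha n
  · intro z hz
    simp only [Set.mem_iUnion, Finset.mem_range] at hz
    obtain ⟨i, hi, a, ha, rfl⟩ := hz
    refine Set.mem_iInter.2 fun n => ?_
    cases n with
    | zero =>
        simp only [layer_zero]
        exact hCmaps m i hi ⟨a, Fs_subset (w := w) (p := p) (C := C) (m + 1) ha, rfl⟩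
    | succ n =>
        have := Fs_subset_layer (w := w) (p := p) (C := C) (m + 1) n ha
        rw [mem_layer] at this
        obtain ⟨t, ⟨hlen, hadm⟩, ⟨c, hc, rfl⟩⟩ := this
        rw [mem_layer]
        exact ⟨i :: t, ⟨by simp [hlen], ⟨hi, hadm⟩⟩, ⟨c, hc, rfl⟩⟩

/-- Iterated splitting of the limit set. -/
lemma Fs_split_iter (m n : ℕ) :
    Fs w p C m = ⋃ l ∈ wordSet p m n, compL w m l '' Fs w p C (m + n) := by
  induction n generalizing m with
  | zero =>
      ext z
      simp only [Set.mem_iUnion]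
      constructor
      · intro hz; exact ⟨[], ⟨rfl, trivial⟩, by simpa using hz⟩
      · rintro ⟨l, ⟨hlen, _⟩, hz⟩
        rw [List.length_eq_zero_iff] at hlen
        subst hlen
        simpa using hz
  | succ n ih =>
      rw [ih m]
      ext z
      simp only [Set.mem_iUnion]
      constructor
      · rintro ⟨l, ⟨hlen, hadm⟩, ⟨a, ha, rfl⟩⟩
        rw [Fs_split hp hCmaps hcont hinj hCcomp hCne (m + n)] at ha
        simp only [Set.mem_iUnion, Finset.mem_range] at ha
        obtain ⟨i, hi, b, hb, rfl⟩ := ha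
        refine ⟨l ++ [i], ⟨by simp [hlen], AdmL_append.2 ⟨hadm, by rw [hlen]; exact ⟨hi, trivial⟩⟩⟩, b, by rw [show m + (n+1) = m + n + 1 by omega]; exact hb, ?_⟩
        rw [compL_append, hlen]
        rfl
      · rintro ⟨l, ⟨hlen, hadm⟩, ⟨a, ha, rfl⟩⟩
        have hlne : l ≠ [] := by intro h; subst h; simp at hlen
        obtain ⟨t, i, rfl⟩ : ∃ t i, l = t ++ [i] :=
          ⟨l.dropLast, l.getLast hlne, (List.dropLast_append_getLast hlne).symm⟩
        rw [AdmL_append] at hadm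
        have htlen : t.length = n := by simpa using hlen
        refine ⟨t, ⟨htlen, hadm.1⟩, w (m + n) i a, ?_, ?_⟩
        · rw [Fs_split hp hCmaps hcont hinj hCcomp hCne (m + n)]
          refine Set.mem_biUnion (Finset.mem_range.2 (htlen ▸ hadm.2.1)) ⟨a, ?_, rfl⟩
          rw [show m + n + 1 = m + (n + 1) by omega]
          exact ha
        · rw [compL_append, htlen]
          rfl

end

end LimitStructure

section Stopping

variable {X : Type*} [MetricSpace X]
variable {w : ℕ → ℕ → X → X} {p : ℕ → ℕ} (lam : ℕ → ℕ → ℝ) {lamLow lamUp : ℝ} {C : Set X}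

/-- Stopped words at scale `ε`. -/
def stopSet (p : ℕ → ℕ) (ε : ℝ) : Set (List ℕ) :=
  {l | AdmL p 0 l ∧ LamL lam 0 l ≤ ε ∧ ε < LamL lam 0 l.dropLast}

variable {lam}
variable (hlow : 0 < lamLow) (hup : lamUp < 1)
  (hlam : ∀ n i, i < p n → lamLow ≤ lam n i ∧ lam n i ≤ lamUp)

lemma stop_ne_nil {ε : ℝ} (hε1 : ε < 1) {l : List ℕ} (hl : l ∈ stopSet lam p ε) : l ≠ [] := by
  rintro rfl
  exact absurd hl.2.1 (by simp; linarith)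

include hlow hlam in
lemma stop_lower {ε : ℝ} (hε0 : 0 ≤ ε) {l : List ℕ} (hl : l ∈ stopSet lam p ε) :
    lamLow * ε < LamL lam 0 l := by
  obtain ⟨hadm, hle, hgt⟩ := hl
  rcases eq_or_ne l [] with rfl | hne
  · simp at hle hgt; linarith
  obtain ⟨t, i, rfl⟩ : ∃ t i, l = t ++ [i] :=
    ⟨l.dropLast, l.getLast hne, (List.dropLast_append_getLast hne).symm⟩
  rw [List.dropLast_concat] at hgt
  rw [AdmL_append] at hadm
  have hi : i < p t.length := by simpa using hadm.2.1
  rw [LamL_append]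
  have h1 : lamLow ≤ lam (0 + t.length) i := (hlam _ _ (by simpa using hi)).1
  calc lamLow * ε < lam (0 + t.length) i * LamL lam 0 t := by
        apply mul_lt_mul' h1 hgt hε0 (lt_of_lt_of_le hlow h1)
    _ = LamL lam 0 t * LamL lam (0 + t.length) [i] := by simp [mul_comm]
  
include hlow hup hlam in
lemma exists_stopped_prefix {ε : ℝ} (hε1 : ε < 1) {l : List ℕ} (hadm : AdmL p 0 l)
    (hle : LamL lam 0 l ≤ ε) : ∃ s ∈ stopSet lam p ε, s <+: l := by
  induction l using List.reverseRecOn with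
  | nil => simp at hle; linarith
  | append_singleton t i ih =>
      rw [AdmL_append] at hadm
      by_cases h : LamL lam 0 t ≤ ε
      · obtain ⟨s, hs, hpre⟩ := ih hadm.1 h
        exact ⟨s, hs, hpre.trans (List.prefix_append t [i])⟩
      · exact ⟨t ++ [i], ⟨AdmL_append.2 hadm, hle, by rw [List.dropLast_concat]; linarith⟩,
          List.prefix_refl _⟩

include hlow hup hlam in
lemma stop_length_le {ε : ℝ} {n₀ : ℕ} (h0up : 0 < lamUp) (hn₀ : lamUp ^ n₀ ≤ ε) {l : List ℕ}
    (hl : l ∈ stopSet lam p ε) (hε1 : ε < 1) : l.length ≤ n₀ := by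
  obtain ⟨hadm, hle, hgt⟩ := hl
  have hne : l ≠ [] := stop_ne_nil hε1 ⟨hadm, hle, hgt⟩
  obtain ⟨t, i, rfl⟩ : ∃ t i, l = t ++ [i] :=
    ⟨l.dropLast, l.getLast hne, (List.dropLast_append_getLast hne).symm⟩
  rw [List.dropLast_concat] at hgt
  rw [AdmL_append] at hadm
  have h1 : LamL lam 0 t ≤ lamUp ^ t.length := LamL_le_pow hlow hlam hadm.1
  have h2 : lamUp ^ n₀ < lamUp ^ t.length := lt_of_le_of_lt hn₀ (lt_of_lt_of_le hgt h1)
  have h3 : t.length < n₀ := by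
    by_contra hc
    push_neg at hc
    exact absurd (pow_le_pow_of_le_one h0up.le hup.le hc) (not_le.2 h2)
  simp; omega

include hlow hup hlam in
lemma stopSet_finite {ε : ℝ} (hε0 : 0 < ε) (hε1 : ε < 1) (h0up : 0 < lamUp) :
    (stopSet lam p ε).Finite := by
  obtain ⟨n₀, hn₀⟩ : ∃ n₀, lamUp ^ n₀ ≤ ε := by
    obtain ⟨n₀, h⟩ := exists_pow_lt_of_lt_one hε0 hup
    exact ⟨n₀, h.le⟩
  have hsub : stopSet lam p ε ⊆ ⋃ k ∈ Finset.range (n₀ + 1), wordSet p 0 k := by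
    intro l hl
    have := stop_length_le hlow hup hlam h0up hn₀ hl hε1
    exact Set.mem_biUnion (Finset.mem_range.2 (by omega)) ⟨rfl, hl.1⟩
  exact Set.Finite.subset (Set.Finite.biUnion (Finset.range (n₀+1)).finite_toSet
    fun k _ => wordSet_finite 0 k) hsub

include hlow hup hlam in
lemma stop_not_prefix {ε : ℝ} (h0up : 0 < lamUp) {s s' : List ℕ} (hs : s ∈ stopSet lam p ε)
    (hs' : s' ∈ stopSet lam p ε) (hne : s ≠ s') : ¬ s <+: s' := by
  intro hpre
  have hlt : s.length < s'.length := by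
    rcases lt_or_eq_of_le hpre.length_le with h | h
    · exact h
    · exact absurd (List.IsPrefix.eq_of_length hpre h) hne
  have hpre' : s <+: s'.dropLast := by
    obtain ⟨t, rfl⟩ := hpre
    have htne : t ≠ [] := by rintro rfl; simp at hlt
    rw [List.dropLast_append_of_ne_nil htne]
    exact List.prefix_append _ _
  have h1 : LamL lam 0 s'.dropLast ≤ LamL lam 0 s := by
    exact LamL_prefix_le hlow hlam h0up.le hup (AdmL_prefix hs'.1 (List.dropLast_prefix s')) hpre' 
  exact absurd (le_trans h1 hs.2.1) (not_le.2 hs'.2.2)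

end Stopping

section Covering

variable {X : Type*} [MetricSpace X]
variable {w : ℕ → ℕ → X → X} {p : ℕ → ℕ} {lam : ℕ → ℕ → ℝ} {lamLow lamUp : ℝ} {C : Set X}

variable (hp : ∀ n, 1 ≤ p n)
  (hCmaps : ∀ m i, i < p m → w m i '' C ⊆ C)
  (hcont : ∀ m i, i < p m → Continuous (w m i))
  (hinj : ∀ m i, i < p m → Function.Injective (w m i))
  (hCcomp : IsCompact C) (hCne : C.Nonempty)
  (hlow : 0 < lamLow) (hup : lamUp < 1)
  (hlam : ∀ n i, i < p n → lamLow ≤ lam n i ∧ lam n i ≤ lamUp)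
  (hsim : ∀ n i, i < p n → ∀ a b, dist (w n i a) (w n i b) = lam n i * dist a b)

/-- The genealogical cell of a word. -/
def Fcell (w : ℕ → ℕ → X → X) (p : ℕ → ℕ) (C : Set X) (l : List ℕ) : Set X :=
  compL w 0 l '' Fs w p C l.length

include hp hCmaps hcont hinj hCcomp hCne hlow hup hlam in
lemma stop_cover {ε : ℝ} (hε0 : 0 < ε) (hε1 : ε < 1) :
    Fs w p C 0 ⊆ ⋃ l ∈ stopSet lam p ε, Fcell w p C l := by
  have h0up : 0 < lamUp := lt_of_lt_of_le hlow (le_trans (hlam 0 0 (hp 0)).1 (hlam 0 0 (hp 0)).2)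
  obtain ⟨n₀, hn₀⟩ : ∃ n₀, lamUp ^ n₀ ≤ ε := by
    obtain ⟨n₀, h⟩ := exists_pow_lt_of_lt_one hε0 hup
    exact ⟨n₀, h.le⟩
  intro z hz
  rw [Fs_split_iter hp hCmaps hcont hinj hCcomp hCne 0 n₀] at hz
  simp only [Set.mem_iUnion] at hz
  obtain ⟨l, ⟨hlen, hadm⟩, a, ha, rfl⟩ := hz
  have hle : LamL lam 0 l ≤ ε := le_trans (LamL_le_pow hlow hlam hadm) (by rw [hlen]; exact hn₀)
  obtain ⟨s, hs, t, rfl⟩ := exists_stopped_prefix hlow hup hlam hε1 hadm hle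
  rw [AdmL_append] at hadm
  refine Set.mem_biUnion hs ?_
  rw [Fcell, compL_append]
  refine ⟨compL w (0 + s.length) t a, ?_, rfl⟩
  have hadm' : AdmL p s.length t := by rw [← Nat.zero_add s.length]; exact hadm.2
  have hmem : compL w s.length t a ∈ Fs w p C s.length := by
    rw [Fs_split_iter hp hCmaps hcont hinj hCcomp hCne s.length t.length]
    refine Set.mem_biUnion (show t ∈ wordSet p s.length t.length from ⟨rfl, hadm'⟩) ⟨a, ?_, rfl⟩
    have hnn : s.length + t.length = n₀ := by simpa using hlen
    rw [hnn]
    simpa using ha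
  rw [Nat.zero_add]
  exact hmem

include hsim hlow hlam in
lemma dist_cell {m : ℕ} {l : List ℕ} (hadm : AdmL p m l) (hCb : Bornology.IsBounded C)
    {a b : X} (ha : a ∈ C) (hb : b ∈ C) :
    dist (compL w m l a) (compL w m l b) ≤ LamL lam m l * Metric.diam C := by
  rw [compL_dist hsim hadm]
  have h1 : dist a b ≤ Metric.diam C := Metric.dist_le_diam_of_mem hCb ha hb
  have h2 : 0 ≤ LamL lam m l := (LamL_pos hlow hlam hadm).le
  exact mul_le_mul_of_nonneg_left h1 h2

end Covering

lemma geom_bound {r : ℝ} (h0 : 0 ≤ r) (h1 : r < 1) (n : ℕ) :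
    ∑ k ∈ Finset.range n, r ^ k ≤ (1 - r)⁻¹ := by
  rw [geom_sum_eq (by intro h; rw [h] at h1; linarith) n,
    div_le_iff_of_neg (by linarith : r - 1 < 0)]
  have h2 : (1 - r)⁻¹ * (r - 1) = -1 := by
    rw [show r - 1 = -(1 - r) by ring, mul_neg, inv_mul_cancel₀ (by linarith : (1:ℝ) - r ≠ 0)]
  rw [h2]
  have := pow_nonneg h0 n
  linarith

lemma ofFn_snoc {α : Type*} {n : ℕ} (σ : Fin n → α) (i : α) :
    List.ofFn (Fin.snoc σ i : Fin (n + 1) → α) = List.ofFn σ ++ [i] := by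
  rw [List.ofFn_succ']
  simp [Fin.snoc_castSucc, Fin.snoc_last, List.concat_eq_append]

section Telescope

variable {N : ℕ}
variable {w : ℕ → ℕ → EuclideanSpace ℝ (Fin N) → EuclideanSpace ℝ (Fin N)}
variable {p : ℕ → ℕ} {lam : ℕ → ℕ → ℝ} {lamLow lamUp : ℝ}
variable {C : Set (EuclideanSpace ℝ (Fin N))}
variable {x₀ : EuclideanSpace ℝ (Fin N)} {f : EuclideanSpace ℝ (Fin N) → ℝ}

variable (hp : ∀ n, 1 ≤ p n)
  (hCmaps : ∀ m i, i < p m → w m i '' C ⊆ C)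
  (hcont : ∀ m i, i < p m → Continuous (w m i))
  (hinj : ∀ m i, i < p m → Function.Injective (w m i))
  (hCcomp : IsCompact C) (hCne : C.Nonempty)
  (hlow : 0 < lamLow) (hup : lamUp < 1)
  (hlam : ∀ n i, i < p n → lamLow ≤ lam n i ∧ lam n i ≤ lamUp)
  (hsim : ∀ n i, i < p n → ∀ a b, dist (w n i a) (w n i b) = lam n i * dist a b)
  (hx₀C : x₀ ∈ C)

lemma dirac_step (hf : DiracAdmissible w p x₀ f) {l : List ℕ} (hadm : AdmL p 0 l)
    {i : ℕ} (hi : i < p l.length) :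
    |f (compL w 0 l x₀) - f (compL w 0 (l ++ [i]) x₀)| ≤
      dist (compL w 0 l x₀) (compL w 0 (l ++ [i]) x₀) := by
  have h := hf.2 l.length l.get (AdmL_get hadm) i hi
  rw [compWord_eq_compL, compWord_eq_compL, ofFn_snoc, List.ofFn_get] at h
  exact h

include hsim hlow hup hlam hx₀C in
lemma tele_chain (hf : DiracAdmissible w p x₀ f) (hCb : Bornology.IsBounded C)
    (hwC : ∀ m i, i < p m → w m i x₀ ∈ C)
    {l : List ℕ} (hadm : AdmL p 0 l) :
    ∀ t : List ℕ, AdmL p l.length t →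
      |f (compL w 0 l x₀) - f (compL w 0 (l ++ t) x₀)| ≤
        LamL lam 0 l * Metric.diam C * ∑ k ∈ Finset.range t.length, lamUp ^ k := by
  intro t
  induction t using List.reverseRecOn with
  | nil => intro _; simp
  | append_singleton t i ih =>
      intro hadm'
      rw [AdmL_append] at hadm'
      obtain ⟨ht, hi'⟩ := hadm'
      have hi : i < p (l.length + t.length) := by simpa using hi'.1
      have hadm0 : AdmL p 0 (l ++ t) := AdmL_append.2 ⟨hadm, by rw [Nat.zero_add]; exact ht⟩
      have hstep := dirac_step hf hadm0
        (i := i) (by rw [List.length_append]; exact hi)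
      have hdist : dist (compL w 0 (l ++ t) x₀) (compL w 0 ((l ++ t) ++ [i]) x₀) ≤
          LamL lam 0 l * Metric.diam C * lamUp ^ t.length := by
        have e : compL w 0 ((l ++ t) ++ [i]) x₀ =
            compL w 0 (l ++ t) (w (l.length + t.length) i x₀) := by
          rw [compL_append]
          simp [List.length_append]
        rw [e, compL_dist hsim hadm0]
        have h1 : dist x₀ (w (l.length + t.length) i x₀) ≤ Metric.diam C :=
          Metric.dist_le_diam_of_mem hCb hx₀C (hwC _ _ hi)
        have h2 : LamL lam 0 (l ++ t) ≤ LamL lam 0 l * lamUp ^ t.length := by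
          rw [LamL_append]
          refine mul_le_mul_of_nonneg_left ?_ (LamL_pos hlow hlam hadm).le
          exact LamL_le_pow hlow hlam (m := 0 + l.length) (l := t)
            (by rw [Nat.zero_add]; exact ht)
        calc LamL lam 0 (l ++ t) * dist x₀ (w (l.length + t.length) i x₀)
            ≤ LamL lam 0 (l ++ t) * Metric.diam C :=
              mul_le_mul_of_nonneg_left h1 (LamL_pos hlow hlam hadm0).le
          _ ≤ LamL lam 0 l * lamUp ^ t.length * Metric.diam C :=
              mul_le_mul_of_nonneg_right h2 Metric.diam_nonneg
          _ = LamL lam 0 l * Metric.diam C * lamUp ^ t.length := by ring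
      have hih := ih ht
      have htri : |f (compL w 0 l x₀) - f (compL w 0 (l ++ (t ++ [i])) x₀)| ≤
          |f (compL w 0 l x₀) - f (compL w 0 (l ++ t) x₀)| +
          |f (compL w 0 (l ++ t) x₀) - f (compL w 0 ((l ++ t) ++ [i]) x₀)| := by
        rw [← List.append_assoc]
        exact abs_sub_le _ _ _
      rw [List.length_append, List.length_cons, List.length_nil, Finset.sum_range_succ,
        mul_add]
      calc |f (compL w 0 l x₀) - f (compL w 0 (l ++ (t ++ [i])) x₀)| ≤
          |f (compL w 0 l x₀) - f (compL w 0 (l ++ t) x₀)| +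
          |f (compL w 0 (l ++ t) x₀) - f (compL w 0 ((l ++ t) ++ [i]) x₀)| := htri
        _ ≤ LamL lam 0 l * Metric.diam C * ∑ k ∈ Finset.range t.length, lamUp ^ k +
            LamL lam 0 l * Metric.diam C * lamUp ^ t.length :=
              add_le_add hih (le_trans hstep hdist)

include hp hsim hlow hup hlam hx₀C hcont hCcomp in
/-- Main telescoping estimate: on the genealogical cell of `l`, the value of an
admissible function differs from its value at `x_l` by at most `diam C ⋅ Λ_l/(1-λ̄)`. -/
lemma tele_fcell (hf : DiracAdmissible w p x₀ f) (hCb : Bornology.IsBounded C)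
    (hwC : ∀ m i, i < p m → w m i x₀ ∈ C)
    {l : List ℕ} (hadm : AdmL p 0 l) {z : EuclideanSpace ℝ (Fin N)}
    (hz : z ∈ Fcell w p C l) :
    |f z - f (compL w 0 l x₀)| ≤ LamL lam 0 l * Metric.diam C * (1 - lamUp)⁻¹ := by
  have h0up : 0 < lamUp := lt_of_lt_of_le hlow (le_trans (hlam 0 0 (hp 0)).1 (hlam 0 0 (hp 0)).2)
  obtain ⟨a, ha, rfl⟩ := hz
  set z := compL w 0 l a with hzdef
  refine le_of_forall_pos_le_add fun δ hδ => ?_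
  obtain ⟨ρ, hρ0, hρ⟩ := Metric.continuous_iff.1 hf.1 z δ hδ
  set Q := LamL lam 0 l * Metric.diam C + 1 with hQ
  have hQ0 : 0 < Q := by
    have := mul_nonneg (LamL_pos hlow hlam hadm).le (Metric.diam_nonneg (s := C))
    linarith
  obtain ⟨n, hn⟩ := exists_pow_lt_of_lt_one (div_pos hρ0 hQ0) hup
  have hlayer : a ∈ layer w p C l.length n := Fs_subset_layer _ _ ha
  rw [mem_layer] at hlayer
  obtain ⟨t, ⟨hlen, hadmt⟩, c, hc, hct⟩ := hlayer
  have hadm0 : AdmL p 0 (l ++ t) := AdmL_append.2 ⟨hadm, by rw [Nat.zero_add]; exact hadmt⟩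
  set u := compL w 0 (l ++ t) x₀ with hu
  have hdzu : dist z u < ρ := by
    have e : u = compL w 0 l (compL w l.length t x₀) := by
      rw [hu, compL_append, Nat.zero_add]
    rw [hzdef, e, compL_dist hsim hadm, ← hct]
    have h1 : dist (compL w l.length t c) (compL w l.length t x₀) ≤
        LamL lam l.length t * Metric.diam C := dist_cell hlow hlam hsim hadmt hCb hc hx₀C
    have h2 : LamL lam l.length t ≤ lamUp ^ n := by
      rw [← hlen]
      exact LamL_le_pow hlow hlam hadmt
    have h3 : LamL lam 0 l * (lamUp ^ n * Metric.diam C) < ρ := by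
      have h4 : lamUp ^ n * Q < ρ := (lt_div_iff₀ hQ0).1 hn
      have h5 : LamL lam 0 l * (lamUp ^ n * Metric.diam C) ≤ lamUp ^ n * Q := by
        rw [hQ]
        have hL1 : LamL lam 0 l ≤ 1 := LamL_le_one hlow hlam hadm h0up.le hup
        have hd0 : 0 ≤ Metric.diam C := Metric.diam_nonneg
        have hpw : 0 ≤ lamUp ^ n := pow_nonneg h0up.le n
        nlinarith [(LamL_pos hlow hlam hadm).le]
      linarith
    calc LamL lam 0 l * dist (compL w l.length t c) (compL w l.length t x₀)
        ≤ LamL lam 0 l * (LamL lam l.length t * Metric.diam C) :=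
          mul_le_mul_of_nonneg_left h1 (LamL_pos hlow hlam hadm).le
      _ ≤ LamL lam 0 l * (lamUp ^ n * Metric.diam C) := by
          refine mul_le_mul_of_nonneg_left ?_ (LamL_pos hlow hlam hadm).le
          exact mul_le_mul_of_nonneg_right h2 Metric.diam_nonneg
      _ < ρ := h3
  have hfz : |f z - f u| < δ := by
    have := hρ u (by rw [dist_comm]; exact hdzu)
    rw [abs_sub_comm]
    exact this
  have hchain := tele_chain hlow hup hlam hsim hx₀C hf hCb hwC hadm t hadmt
  have hgeom : LamL lam 0 l * Metric.diam C * ∑ k ∈ Finset.range t.length, lamUp ^ k ≤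
      LamL lam 0 l * Metric.diam C * (1 - lamUp)⁻¹ :=
    mul_le_mul_of_nonneg_left (geom_bound h0up.le hup t.length)
      (mul_nonneg (LamL_pos hlow hlam hadm).le Metric.diam_nonneg)
  calc |f z - f (compL w 0 l x₀)| ≤ |f z - f u| + |f u - f (compL w 0 l x₀)| := abs_sub_le _ _ _
    _ ≤ δ + LamL lam 0 l * Metric.diam C * (1 - lamUp)⁻¹ := by
        refine add_le_add hfz.le ?_
        rw [abs_sub_comm]
        exact le_trans hchain hgeom
    _ = LamL lam 0 l * Metric.diam C * (1 - lamUp)⁻¹ + δ := by ring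

end Telescope

section Graph

variable {X : Type*} [MetricSpace X]

/-- Chaining estimate through a connected set covered by finitely many closed pieces. -/
lemma chain_bound {ι : Type*} [DecidableEq ι] (S : Finset ι) (F : ι → Set X) (g : ι → ℝ)
    (step : ℝ) (hstep0 : 0 ≤ step)
    (hclosed : ∀ a ∈ S, IsClosed (F a))
    (hstep : ∀ a ∈ S, ∀ b ∈ S, (F a ∩ F b).Nonempty → |g a - g b| ≤ step)
    (K : Set X) (hK : IsPreconnected K) (hcover : K ⊆ ⋃ a ∈ S, F a)
    {a₀ b₀ : ι} (ha₀ : a₀ ∈ S) (hb₀ : b₀ ∈ S)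
    (ha₀K : (F a₀ ∩ K).Nonempty) (hb₀K : (F b₀ ∩ K).Nonempty) :
    |g a₀ - g b₀| ≤ S.card * step := by
  classical
  let G : SimpleGraph {a // a ∈ S} :=
    { Adj := fun a b => a ≠ b ∧ (F a.1 ∩ F b.1).Nonempty
      symm := ⟨by
        rintro a b ⟨hne, q, hq1, hq2⟩
        exact ⟨hne.symm, q, hq2, hq1⟩⟩
      loopless := ⟨fun a h => h.1 rfl⟩ }
  have hreach : ∀ b : {a // a ∈ S}, (F b.1 ∩ K).Nonempty → G.Reachable ⟨a₀, ha₀⟩ b := by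
    intro b hbK
    by_contra hnr
    set U₁ : Set X := ⋃ c ∈ {c : {a // a ∈ S} | G.Reachable ⟨a₀, ha₀⟩ c}, F c.1 with hU₁
    set U₂ : Set X := ⋃ c ∈ {c : {a // a ∈ S} | ¬ G.Reachable ⟨a₀, ha₀⟩ c}, F c.1 with hU₂
    have hcl₁ : IsClosed U₁ :=
      Set.Finite.isClosed_biUnion (Set.toFinite _) fun c _ => hclosed c.1 c.2
    have hcl₂ : IsClosed U₂ :=
      Set.Finite.isClosed_biUnion (Set.toFinite _) fun c _ => hclosed c.1 c.2
    have hc : K ⊆ U₁ ∪ U₂ := by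
      intro q hq
      obtain ⟨a, ha, hqa⟩ := Set.mem_iUnion₂.1 (hcover hq)
      by_cases hr : G.Reachable ⟨a₀, ha₀⟩ ⟨a, ha⟩
      · exact Or.inl (Set.mem_biUnion hr hqa)
      · exact Or.inr (Set.mem_biUnion hr hqa)
    have hne₁ : (K ∩ U₁).Nonempty := by
      obtain ⟨q, hq1, hq2⟩ := ha₀K
      exact ⟨q, hq2, Set.mem_biUnion (SimpleGraph.Reachable.refl _) hq1⟩
    have hne₂ : (K ∩ U₂).Nonempty := by
      obtain ⟨q, hq1, hq2⟩ := hbK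
      exact ⟨q, hq2, Set.mem_biUnion hnr hq1⟩
    obtain ⟨q, hqK, hq₁, hq₂⟩ := isPreconnected_closed_iff.1 hK U₁ U₂ hcl₁ hcl₂ hc hne₁ hne₂
    obtain ⟨c₁, hc₁, hqc₁⟩ := Set.mem_iUnion₂.1 hq₁
    obtain ⟨c₂, hc₂, hqc₂⟩ := Set.mem_iUnion₂.1 hq₂
    rcases eq_or_ne c₁ c₂ with rfl | hne
    · exact hc₂ hc₁
    · exact hc₂ (hc₁.trans (SimpleGraph.Adj.reachable ⟨hne, q, hqc₁, hqc₂⟩))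
  have hwb : ∀ (a b : {a // a ∈ S}) (W : G.Walk a b), |g a.1 - g b.1| ≤ W.length * step := by
    intro a b W
    induction W with
    | nil => simp
    | @cons u v t hadj W ih =>
        calc |g u.1 - g t.1| ≤ |g u.1 - g v.1| + |g v.1 - g t.1| := abs_sub_le _ _ _
          _ ≤ step + W.length * step := add_le_add (hstep u.1 u.2 v.1 v.2 hadj.2) ih
          _ = ((W.length : ℝ) + 1) * step := by ring
          _ = ((SimpleGraph.Walk.cons hadj W).length : ℝ) * step := by
              rw [SimpleGraph.Walk.length_cons]
              push_cast
              ring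
  obtain ⟨W⟩ := hreach ⟨b₀, hb₀⟩ hb₀K
  have h1 := hwb _ _ W.bypass
  have h2 : W.bypass.length < S.card := by
    have := W.bypass_isPath.length_lt
    rwa [Fintype.card_coe] at this
  calc |g a₀ - g b₀| ≤ W.bypass.length * step := h1
    _ ≤ S.card * step := by
        refine mul_le_mul_of_nonneg_right ?_ hstep0
        exact_mod_cast h2.le

end Graph

section Counting

open Metric

lemma count_balls {N : ℕ} {ι : Type*} (S : Finset ι)
    (c : ι → EuclideanSpace ℝ (Fin N)) (r : ι → ℝ) {R ρ : ℝ} (hρ : 0 < ρ) (hR : 0 ≤ R)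
    (hr : ∀ a ∈ S, ρ ≤ r a) (x : EuclideanSpace ℝ (Fin N))
    (hsub : ∀ a ∈ S, closedBall (c a) (r a) ⊆ closedBall x R)
    (hdisj : (S : Set ι).PairwiseDisjoint (fun a => closedBall (c a) (r a))) :
    (S.card : ℝ) * ρ ^ N ≤ R ^ N := by
  set B := volume (ball (0 : EuclideanSpace ℝ (Fin N)) 1) with hB
  have hB0 : B ≠ 0 := (measure_ball_pos volume _ one_pos).ne'
  have hBt : B ≠ ⊤ := measure_ball_lt_top.ne
  have hvol : ∀ a ∈ S, ENNReal.ofReal (ρ ^ N) * B ≤ volume (closedBall (c a) (r a)) := by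
    intro a ha
    rw [Measure.addHaar_closedBall volume (c a) (le_trans hρ.le (hr a ha)),
      finrank_euclideanSpace_fin]
    exact mul_le_mul_left (ENNReal.ofReal_le_ofReal
      (pow_le_pow_left₀ hρ.le (hr a ha) N)) B
  have hsum : (S.card : ENNReal) * (ENNReal.ofReal (ρ ^ N) * B) ≤
      volume (closedBall x R) := by
    calc (S.card : ENNReal) * (ENNReal.ofReal (ρ ^ N) * B)
        = ∑ _a ∈ S, ENNReal.ofReal (ρ ^ N) * B := by
          rw [Finset.sum_const, nsmul_eq_mul]
      _ ≤ ∑ a ∈ S, volume (closedBall (c a) (r a)) := Finset.sum_le_sum hvol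
      _ = volume (⋃ a ∈ S, closedBall (c a) (r a)) :=
          (measure_biUnion_finset hdisj fun a _ => measurableSet_closedBall).symm
      _ ≤ volume (closedBall x R) := measure_mono (Set.iUnion₂_subset hsub)
  rw [Measure.addHaar_closedBall volume x hR, finrank_euclideanSpace_fin] at hsum
  rw [← mul_assoc] at hsum
  rw [ENNReal.mul_le_mul_iff_left hB0 hBt] at hsum
  rw [← ENNReal.ofReal_natCast S.card, ← ENNReal.ofReal_mul (Nat.cast_nonneg _)] at hsum
  exact (ENNReal.ofReal_le_ofReal_iff (pow_nonneg hR N)).1 hsum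

end Counting

end Stmt17

set_option maxHeartbeats 1000000

/-- On a limit fractal with ratios bounded away from `0` and `1` and with OSC,
there is `c ≥ 1` such that `‖x−y‖ ≤ d(x,y) ≤ c ⋅ d_geo(x,y)`: the Connes metric is
dominated by `c` times the length of any rectifiable curve in `F` joining `x, y`. -/
theorem stmt17 {N : ℕ} (hN : 0 < N)
    (w : ℕ → ℕ → EuclideanSpace ℝ (Fin N) → EuclideanSpace ℝ (Fin N))
    (p : ℕ → ℕ) (hp : ∀ n, 1 ≤ p n)
    (lam : ℕ → ℕ → ℝ) (lamLow lamUp : ℝ)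
    (hlow : 0 < lamLow) (hup : lamUp < 1)
    (hlam : ∀ n i, i < p n → lamLow ≤ lam n i ∧ lam n i ≤ lamUp)
    (hsim : ∀ n i, i < p n → ∀ a b, dist (w n i a) (w n i b) = lam n i * dist a b)
    (V : Set (EuclideanSpace ℝ (Fin N)))
    (hVopen : IsOpen V) (hVbdd : Bornology.IsBounded V) (hVne : V.Nonempty)
    (hmaps : ∀ n i, i < p n → w n i '' V ⊆ V)
    (hdisj : ∀ n i j, i < p n → j < p n → i ≠ j → Disjoint (w n i '' V) (w n j '' V))
    (x₀ : EuclideanSpace ℝ (Fin N)) (hx₀ : x₀ ∈ V) :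
    ∃ c : ℝ, 1 ≤ c ∧
      ∀ x ∈ limitSet w p (closure V), ∀ y ∈ limitSet w p (closure V),
        dist x y ≤ connesDist w p x₀ x y ∧
        ∀ γ : ℝ → EuclideanSpace ℝ (Fin N),
          ContinuousOn γ (Icc 0 1) → γ 0 = x → γ 1 = y →
          MapsTo γ (Icc 0 1) (limitSet w p (closure V)) →
          ENNReal.ofReal (connesDist w p x₀ x y) ≤
            ENNReal.ofReal c * eVariationOn γ (Icc 0 1) := by
  classical
  open Stmt17 in
  -- basic setup
  set C : Set (EuclideanSpace ℝ (Fin N)) := closure V with hCdef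
  have hx₀C : x₀ ∈ C := subset_closure hx₀
  have hCne : C.Nonempty := ⟨x₀, hx₀C⟩
  have hCcomp : IsCompact C := Metric.isCompact_of_isClosed_isBounded isClosed_closure hVbdd.closure
  have hCb : Bornology.IsBounded C := hVbdd.closure
  have hupos : 0 < lamUp := lt_of_lt_of_le hlow (le_trans (hlam 0 0 (hp 0)).1 (hlam 0 0 (hp 0)).2)
  have hcont : ∀ m i, i < p m → Continuous (w m i) := fun m i hi => sim_continuous (hsim m i hi)
  have hinj : ∀ m i, i < p m → Function.Injective (w m i) := fun m i hi =>
    sim_injective (lt_of_lt_of_le hlow (hlam m i hi).1) (hsim m i hi)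
  have hCmaps : ∀ m i, i < p m → w m i '' C ⊆ C := fun m i hi =>
    w_maps_closure hsim hmaps hi
  have hwx₀C : ∀ m i, i < p m → w m i x₀ ∈ C := fun m i hi =>
    subset_closure (hmaps m i hi ⟨x₀, hx₀, rfl⟩)
  set D : ℝ := Metric.diam C with hDdef
  have hD0 : 0 ≤ D := Metric.diam_nonneg
  have hinv0 : 0 ≤ (1 - lamUp)⁻¹ := inv_nonneg.2 (by linarith)
  -- inner ball
  obtain ⟨r₀, hr₀pos, hball⟩ := Metric.isOpen_iff.1 hVopen x₀ hx₀
  set r₁ : ℝ := r₀ / 2 with hr₁def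
  have hr₁pos : 0 < r₁ := by positivity
  have hr₁V : Metric.closedBall x₀ r₁ ⊆ V :=
    (Metric.closedBall_subset_ball (by linarith)).trans hball
  -- global bound M
  set M : ℝ := 2 * D * (1 - lamUp)⁻¹ with hMdef
  have hM0 : 0 ≤ M := by positivity
  have hFcellnil : Fcell w p C [] = Fs w p C 0 := by
    ext z; simp [Fcell]
  have hFeq : limitSet w p C = Fs w p C 0 := limitSet_eq_Fs
  -- the global estimate for admissible functions
  have hglobal : ∀ f, DiracAdmissible w p x₀ f → ∀ x ∈ Fs w p C 0, ∀ y ∈ Fs w p C 0,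
      |f x - f y| ≤ M := by
    intro f hf x hxF y hyF
    have h1 : |f x - f (compL w 0 [] x₀)| ≤ LamL lam 0 [] * D * (1 - lamUp)⁻¹ :=
      tele_fcell hp hcont hCcomp hlow hup hlam hsim hx₀C hf hCb hwx₀C (l := []) trivial
        (by rw [hFcellnil]; exact hxF)
    have h2 : |f y - f (compL w 0 [] x₀)| ≤ LamL lam 0 [] * D * (1 - lamUp)⁻¹ :=
      tele_fcell hp hcont hCcomp hlow hup hlam hsim hx₀C hf hCb hwx₀C (l := []) trivial
        (by rw [hFcellnil]; exact hyF)
    simp only [LamL_nil, one_mul] at h1 h2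
    calc |f x - f y| ≤ |f x - f (compL w 0 [] x₀)| + |f (compL w 0 [] x₀) - f y| :=
          abs_sub_le _ _ _
      _ ≤ D * (1 - lamUp)⁻¹ + D * (1 - lamUp)⁻¹ := add_le_add h1 (by rwa [abs_sub_comm])
      _ = M := by rw [hMdef]; ring
  -- the admissible set
  have hDset : ∀ x y : EuclideanSpace ℝ (Fin N),
      {t | ∃ f, DiracAdmissible w p x₀ f ∧ t = |f x - f y|}.Nonempty := by
    intro x y
    refine ⟨0, fun _ => 0, ⟨continuous_const, ?_⟩, by simp⟩
    intro n σ hσ i hi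
    simpa using dist_nonneg
  have hDbdd : ∀ x ∈ Fs w p C 0, ∀ y ∈ Fs w p C 0,
      BddAbove {t | ∃ f, DiracAdmissible w p x₀ f ∧ t = |f x - f y|} := by
    intro x hx y hy
    exact ⟨M, fun t ⟨f, hf, ht⟩ => ht ▸ hglobal f hf x hx y hy⟩
  -- the constant
  set m₀ : ℝ := ((1 + (D + r₁)) / (lamLow * r₁)) ^ N with hm₀def
  have hm₀0 : 0 ≤ m₀ := by positivity
  set c : ℝ := 1 + 2 * M + (2 * m₀ + 2) * D * (1 - lamUp)⁻¹ with hcdef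
  have hterm3 : 0 ≤ (2 * m₀ + 2) * D * (1 - lamUp)⁻¹ :=
    mul_nonneg (mul_nonneg (by linarith) hD0) hinv0
  have hc1 : 1 ≤ c := by rw [hcdef]; linarith
  refine ⟨c, hc1, ?_⟩
  intro x hx y hy
  rw [hFeq] at hx hy
  constructor
  · -- lower bound : dist x y ≤ connesDist
    have hmem : dist x y ∈ {t | ∃ f, DiracAdmissible w p x₀ f ∧ t = |f x - f y|} := by
      refine ⟨fun z => dist z y, ⟨continuous_id.dist continuous_const, ?_⟩, ?_⟩
      · intro n σ hσ i hi
        exact abs_dist_sub_le _ _ _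
      · show dist x y = |dist x y - dist y y|
        rw [dist_self, sub_zero, abs_of_nonneg dist_nonneg]
    exact le_csSup (hDbdd x hx y hy) hmem
  · -- upper bound
    intro γ hγcont hγ0 hγ1 hγmaps
    rcases eq_or_ne (eVariationOn γ (Icc 0 1)) ⊤ with htop | htop
    · rw [htop, ENNReal.mul_top (by simp; linarith : ENNReal.ofReal c ≠ 0)]
      exact le_top
    set L : ℝ := (eVariationOn γ (Icc 0 1)).toReal with hLdef
    have hL0 : 0 ≤ L := ENNReal.toReal_nonneg
    have hdb : ∀ s ∈ Icc (0:ℝ) 1, ∀ t ∈ Icc (0:ℝ) 1, dist (γ s) (γ t) ≤ L := by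
      intro s hs t ht
      rw [dist_edist]
      exact ENNReal.toReal_mono htop (eVariationOn.edist_le γ hs ht)
    have key : ∀ f, DiracAdmissible w p x₀ f → |f x - f y| ≤ c * L := by
      intro f hf
      by_cases hLhalf : (1:ℝ)/2 ≤ L
      · calc |f x - f y| ≤ M := hglobal f hf x hx y hy
          _ ≤ 2 * M * L := by
              have h4 : 0 ≤ M * (2 * L - 1) := mul_nonneg hM0 (by linarith)
              nlinarith
          _ ≤ c * L := by
              refine mul_le_mul_of_nonneg_right ?_ hL0
              rw [hcdef]
              linarith
      · push_neg at hLhalf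
        rcases eq_or_lt_of_le hL0 with hL0' | hLpos
        · -- L = 0 : x = y
          have hxy : x = y := by
            have := hdb 0 (by constructor <;> norm_num) 1 (by constructor <;> norm_num)
            rw [hγ0, hγ1, ← hL0'] at this
            exact dist_le_zero.1 this
          rw [hxy, sub_self, abs_zero]
          positivity
        · -- main case : 0 < L < 1/2, take ε = L
          set ε : ℝ := L with hεdef
          have hε0 : 0 < ε := hLpos
          have hε1 : ε < 1 := by linarith
          set Im : Set (EuclideanSpace ℝ (Fin N)) := γ '' (Icc 0 1) with hImdef
          have hImconn : IsPreconnected Im := isPreconnected_Icc.image γ hγcont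
          have hImF : Im ⊆ Fs w p C 0 := by
            rintro q ⟨t, ht, rfl⟩
            rw [← hFeq]
            exact hγmaps ht
          have hxIm : x ∈ Im := ⟨0, by constructor <;> norm_num, hγ0⟩
          have hyIm : y ∈ Im := ⟨1, by constructor <;> norm_num, hγ1⟩
          -- the touched stopped cells
          set T : Set (List ℕ) := {l ∈ stopSet lam p ε | (Fcell w p C l ∩ Im).Nonempty}
            with hTdef
          have hTfin : T.Finite :=
            (stopSet_finite hlow hup hlam hε0 hε1 hupos).subset fun l hl => hl.1
          set Sfin : Finset (List ℕ) := hTfin.toFinset with hSdef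
          have hSmem : ∀ l, l ∈ Sfin ↔ l ∈ stopSet lam p ε ∧ (Fcell w p C l ∩ Im).Nonempty := by
            intro l
            rw [hSdef, Set.Finite.mem_toFinset]
            exact Iff.rfl
          have hcover : Im ⊆ ⋃ l ∈ Sfin, Fcell w p C l := by
            intro q hq
            obtain ⟨l, hl, hql⟩ := Set.mem_iUnion₂.1
              (stop_cover hp hCmaps hcont hinj hCcomp hCne hlow hup hlam hε0 hε1 (hImF hq))
            exact Set.mem_biUnion ((hSmem l).2 ⟨hl, ⟨q, hql, hq⟩⟩) hql
          -- endpoints cells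
          obtain ⟨sx, hsx, hxsx⟩ := Set.mem_iUnion₂.1 (hcover hxIm)
          obtain ⟨sy, hsy, hysy⟩ := Set.mem_iUnion₂.1 (hcover hyIm)
          -- the cell estimate
          have hcell : ∀ l ∈ Sfin, ∀ z ∈ Fcell w p C l,
              |f z - f (compL w 0 l x₀)| ≤ ε * D * (1 - lamUp)⁻¹ := by
            intro l hl z hz
            have hadm : AdmL p 0 l := ((hSmem l).1 hl).1.1
            refine le_trans (tele_fcell hp hcont hCcomp hlow hup hlam hsim hx₀C hf hCb hwx₀C
              hadm hz) ?_
            have := ((hSmem l).1 hl).1.2.1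
            exact mul_le_mul_of_nonneg_right (mul_le_mul_of_nonneg_right this hD0) hinv0
          -- the adjacency estimate
          set step : ℝ := 2 * ε * D * (1 - lamUp)⁻¹ with hstepdef
          have hstep0 : 0 ≤ step := by positivity
          have hadj : ∀ a ∈ Sfin, ∀ b ∈ Sfin,
              (Fcell w p C a ∩ Fcell w p C b).Nonempty →
              |f (compL w 0 a x₀) - f (compL w 0 b x₀)| ≤ step := by
            intro a ha b hb ⟨z, hza, hzb⟩
            calc |f (compL w 0 a x₀) - f (compL w 0 b x₀)| ≤
                |f z - f (compL w 0 a x₀)| + |f z - f (compL w 0 b x₀)| := by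
                  rw [abs_sub_comm (f z)]
                  exact abs_sub_le _ _ _
              _ ≤ ε * D * (1 - lamUp)⁻¹ + ε * D * (1 - lamUp)⁻¹ :=
                  add_le_add (hcell a ha z hza) (hcell b hb z hzb)
              _ = step := by rw [hstepdef]; ring
          -- closedness of cells
          have hclosed : ∀ l ∈ Sfin, IsClosed (Fcell w p C l) := by
            intro l hl
            have hadm : AdmL p 0 l := ((hSmem l).1 hl).1.1
            exact ((Fs_isCompact hcont hCcomp l.length).image
              (compL_continuous hcont hadm)).isClosed
          -- chain bound
          have hchain := chain_bound Sfin (Fcell w p C) (fun l => f (compL w 0 l x₀)) step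
            hstep0 hclosed hadj Im hImconn hcover hsx hsy ⟨x, hxsx, hxIm⟩ ⟨y, hysy, hyIm⟩
          -- cardinality bound
          have hcard : (Sfin.card : ℝ) ≤ m₀ := by
            have hcount := count_balls Sfin (fun l => compL w 0 l x₀)
              (fun l => LamL lam 0 l * r₁) (R := L + (D + r₁) * ε)
              (ρ := lamLow * ε * r₁) (by positivity) (by positivity) ?_ x ?_ ?_
            · -- deduce card ≤ m₀
              have hρpos : (0:ℝ) < (lamLow * ε * r₁) ^ N := by positivity
              have hRe : (L + (D + r₁) * ε) ^ N = m₀ * (lamLow * ε * r₁) ^ N := by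
                rw [hm₀def, ← mul_pow]
                congr 1
                rw [hεdef]
                field_simp
              rw [hRe] at hcount
              exact le_of_mul_le_mul_right hcount hρpos
            · -- radii lower bound
              intro l hl
              have := stop_lower hlow hlam hε0.le ((hSmem l).1 hl).1
              have : lamLow * ε ≤ LamL lam 0 l := this.le
              exact mul_le_mul_of_nonneg_right this hr₁pos.le
            · -- inclusion in the big ball
              intro l hl
              obtain ⟨q, hqF, hqIm⟩ := ((hSmem l).1 hl).2
              have hadm : AdmL p 0 l := ((hSmem l).1 hl).1.1
              have hLaml : LamL lam 0 l ≤ ε := ((hSmem l).1 hl).1.2.1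
              intro u hu
              rw [Metric.mem_closedBall] at hu ⊢
              have h1 : dist (compL w 0 l x₀) q ≤ ε * D := by
                obtain ⟨a, haF, rfl⟩ := hqF
                have := dist_cell hlow hlam hsim hadm hCb hx₀C
                  (Fs_subset (w := w) (p := p) (C := C) l.length haF)
                refine le_trans this ?_
                exact mul_le_mul_of_nonneg_right hLaml hD0
              have h2 : dist q x ≤ L := by
                obtain ⟨t, ht, rfl⟩ := hqIm
                rw [← hγ0]
                exact hdb t ht 0 (by constructor <;> norm_num)
              have h3 : dist u (compL w 0 l x₀) ≤ ε * r₁ :=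
                le_trans hu (mul_le_mul_of_nonneg_right hLaml hr₁pos.le)
              calc dist u x ≤ dist u (compL w 0 l x₀) + dist (compL w 0 l x₀) q + dist q x :=
                    dist_triangle4 _ _ _ _
                _ ≤ ε * r₁ + ε * D + L := by
                    exact add_le_add (add_le_add h3 h1) h2
                _ = L + (D + r₁) * ε := by ring
            · -- pairwise disjointness
              intro a ha b hb hab
              have hadma : AdmL p 0 a := ((hSmem a).1 (by exact ha)).1.1
              have hadmb : AdmL p 0 b := ((hSmem b).1 (by exact hb)).1.1
              have hballa : Metric.closedBall (compL w 0 a x₀) (LamL lam 0 a * r₁) =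
                  compL w 0 a '' Metric.closedBall x₀ r₁ :=
                (sim_image_closedBall (LamL_pos hlow hlam hadma)
                  (compL_dist hsim hadma) x₀).symm
              have hballb : Metric.closedBall (compL w 0 b x₀) (LamL lam 0 b * r₁) =
                  compL w 0 b '' Metric.closedBall x₀ r₁ :=
                (sim_image_closedBall (LamL_pos hlow hlam hadmb)
                  (compL_dist hsim hadmb) x₀).symm
              simp only [Function.onFun]
              rw [hballa, hballb]
              have hd : Disjoint (compL w 0 a '' V) (compL w 0 b '' V) :=
                cellsV_disjoint hlow hlam hsim hmaps hdisj hadma hadmb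
                  (stop_not_prefix hlow hup hlam hupos ((hSmem a).1 (by exact ha)).1
                    ((hSmem b).1 (by exact hb)).1 hab)
                  (stop_not_prefix hlow hup hlam hupos ((hSmem b).1 (by exact hb)).1
                    ((hSmem a).1 (by exact ha)).1 (Ne.symm hab))
              exact hd.mono (Set.image_mono hr₁V) (Set.image_mono hr₁V)
          -- final combination
          have hendx : |f x - f (compL w 0 sx x₀)| ≤ ε * D * (1 - lamUp)⁻¹ :=
            hcell sx hsx x hxsx
          have hendy : |f y - f (compL w 0 sy x₀)| ≤ ε * D * (1 - lamUp)⁻¹ :=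
            hcell sy hsy y hysy
          have hcs : (Sfin.card : ℝ) * step ≤ m₀ * step :=
            mul_le_mul_of_nonneg_right hcard hstep0
          have t1 : |f x - f y| ≤ |f x - f (compL w 0 sx x₀)| +
              (|f (compL w 0 sx x₀) - f (compL w 0 sy x₀)| +
               |f (compL w 0 sy x₀) - f y|) :=
            le_trans (abs_sub_le _ (f (compL w 0 sx x₀)) _)
              (add_le_add_right (abs_sub_le _ (f (compL w 0 sy x₀)) _) _)
          have t2 : |f x - f y| ≤ ε * D * (1 - lamUp)⁻¹ +
              (m₀ * step + ε * D * (1 - lamUp)⁻¹) := by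
            refine le_trans t1 (add_le_add hendx (add_le_add (le_trans hchain hcs) ?_))
            rw [abs_sub_comm]
            exact hendy
          have t3 : ε * D * (1 - lamUp)⁻¹ + (m₀ * step + ε * D * (1 - lamUp)⁻¹) =
              ((2 * m₀ + 2) * D * (1 - lamUp)⁻¹) * L := by
            rw [hstepdef, hεdef]; ring
          refine le_trans t2 (le_trans (le_of_eq t3) ?_)
          refine mul_le_mul_of_nonneg_right ?_ hL0
          rw [hcdef]
          linarith
    -- conclude
    have hsup : connesDist w p x₀ x y ≤ c * L := by
      refine Real.sSup_le ?_ (by positivity)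
      rintro t ⟨f, hf, rfl⟩
      exact key f hf
    have e1 : ENNReal.ofReal (connesDist w p x₀ x y) ≤ ENNReal.ofReal (c * L) :=
      ENNReal.ofReal_le_ofReal hsup
    have e2 : ENNReal.ofReal (c * L) = ENNReal.ofReal c * ENNReal.ofReal L :=
      ENNReal.ofReal_mul (by linarith)
    have e3 : ENNReal.ofReal L = eVariationOn γ (Icc 0 1) := ENNReal.ofReal_toReal htop
    rw [e2, e3] at e1
    exact e1
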